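/- Let X ≻ 0 on ℝⁿ, A_z ∈ ℝ^{n×n}, b_z ∈ ℝⁿ, and positive reals r_e, w̄, μ_e ≥ 0 such that the block matrix [[A_zᵀ X + X A_z + μ_e X, −X b_z],[−b_zᵀ X, −μ_e r_e²/w̄²]] is negative definite. Then for every e ∈ ℝⁿ and w ∈ ℝ with eᵀ X e ≥ r_e² and w² ≤ w̄², one has 2 eᵀ X (A_z e − b_z w) < 0. -/

import Mathlib

open Matrix

theorem estimator_lmi_decrease (n : ℕ)
    (X Az : Matrix (Fin n) (Fin n) ℝ)
    (hXsymm : X.IsSymm) (hXpd : X.PosDef)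
    (bz : Fin n → ℝ) (re wbar μe : ℝ)
    (hre : 0 < re) (hwbar : 0 < wbar) (hμe : 0 ≤ μe)
    (hND : (-(Matrix.fromBlocks
        (Azᵀ * X + X * Az + μe • X)
        (fun i (_ : Fin 1) => -(X *ᵥ bz) i)
        (fun (_ : Fin 1) j => -(X *ᵥ bz) j)
        (fun (_ : Fin 1) (_ : Fin 1) => -(μe * re ^ 2 / wbar ^ 2)))).PosDef) :
    ∀ (e : Fin n → ℝ) (w : ℝ),
      re ^ 2 ≤ e ⬝ᵥ X *ᵥ e → w ^ 2 ≤ wbar ^ 2 →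
        2 * (e ⬝ᵥ X *ᵥ (Az *ᵥ e - w • bz)) < 0 := by
  intro e w hE hw
  have he : e ≠ 0 := by
    intro h
    subst h
    simp [Matrix.mulVec_zero] at hE
    nlinarith [sq_nonneg re]
  set z : Fin n ⊕ Fin 1 → ℝ := Sum.elim e (fun _ => w) with hzdef
  have hzne : z ≠ 0 := by
    intro h
    apply he
    funext i
    have := congrFun h (Sum.inl i)
    simpa [hzdef] using this
  have hz := hND.dotProduct_mulVec_pos hzne
  -- expand the quadratic form
  rw [show star z = z from funext fun i => star_trivial _] at hz
  set u := X *ᵥ bz with hu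
  set c : Fin 1 → ℝ := fun _ => w with hc
  have hB : e ⬝ᵥ ((fun i (_ : Fin 1) => -u i) *ᵥ c) = -(w * (e ⬝ᵥ u)) := by
    simp only [Matrix.mulVec, dotProduct, Fin.sum_univ_one, hc,
      Finset.mul_sum, ← Finset.sum_neg_distrib]
    exact Finset.sum_congr rfl fun i _ => by ring
  have hC : c ⬝ᵥ ((fun (_ : Fin 1) j => -u j) *ᵥ e) = -(w * (e ⬝ᵥ u)) := by
    simp only [Matrix.mulVec, dotProduct, Fin.sum_univ_one, hc,
      Finset.mul_sum, ← Finset.sum_neg_distrib]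
    exact Finset.sum_congr rfl fun i _ => by ring
  have hD : c ⬝ᵥ ((fun (_ : Fin 1) (_ : Fin 1) => -(μe * re ^ 2 / wbar ^ 2)) *ᵥ c)
      = -(μe * re ^ 2 / wbar ^ 2 * w ^ 2) := by
    simp only [Matrix.mulVec, dotProduct, Fin.sum_univ_one, hc]
    ring
  have hqf : z ⬝ᵥ (-(Matrix.fromBlocks
        (Azᵀ * X + X * Az + μe • X)
        (fun i (_ : Fin 1) => -(X *ᵥ bz) i)
        (fun (_ : Fin 1) j => -(X *ᵥ bz) j)
        (fun (_ : Fin 1) (_ : Fin 1) => -(μe * re ^ 2 / wbar ^ 2)))) *ᵥ z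
      = -(e ⬝ᵥ ((Azᵀ * X + X * Az + μe • X) *ᵥ e)
          - w * (e ⬝ᵥ u) - w * (e ⬝ᵥ u)
          - (μe * re ^ 2 / wbar ^ 2) * w ^ 2) := by
    rw [Matrix.neg_mulVec, dotProduct_neg, hzdef]; erw [Matrix.fromBlocks_mulVec]; rw [
      sumElim_dotProduct_sumElim, dotProduct_add, dotProduct_add]
    simp only [Sum.elim_comp_inl, Sum.elim_comp_inr, ← hu]
    rw [hB, hC, hD]
    ring
  rw [hqf] at hz
  -- identify the symmetric pieces
  have hXsym : ∀ v : Fin n → ℝ, e ⬝ᵥ (X *ᵥ v) = (X *ᵥ e) ⬝ᵥ v := by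
    intro v
    rw [Matrix.dotProduct_mulVec, ← Matrix.vecMul_transpose, hXsymm.eq]
  have hterm : e ⬝ᵥ ((Azᵀ * X + X * Az + μe • X) *ᵥ e)
      = 2 * (e ⬝ᵥ (X *ᵥ (Az *ᵥ e))) + μe * (e ⬝ᵥ (X *ᵥ e)) := by
    rw [Matrix.add_mulVec, Matrix.add_mulVec, dotProduct_add,
      dotProduct_add]
    have h1 : e ⬝ᵥ ((Azᵀ * X) *ᵥ e) = e ⬝ᵥ (X *ᵥ (Az *ᵥ e)) := by
      rw [← Matrix.mulVec_mulVec, Matrix.dotProduct_mulVec (w := X *ᵥ e),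
        Matrix.vecMul_transpose, hXsym (Az *ᵥ e), dotProduct_comm]
    have h2 : e ⬝ᵥ ((X * Az) *ᵥ e) = e ⬝ᵥ (X *ᵥ (Az *ᵥ e)) := by
      rw [← Matrix.mulVec_mulVec]
    have h3 : e ⬝ᵥ ((μe • X) *ᵥ e) = μe * (e ⬝ᵥ (X *ᵥ e)) := by
      rw [Matrix.smul_mulVec, dotProduct_smul]
      simp [smul_eq_mul]
    rw [h1, h2, h3]; ring
  rw [hterm] at hz
  have htarget : e ⬝ᵥ X *ᵥ (Az *ᵥ e - w • bz)
      = e ⬝ᵥ (X *ᵥ (Az *ᵥ e)) - w * (e ⬝ᵥ u) := by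
    rw [Matrix.mulVec_sub, dotProduct_sub, Matrix.mulVec_smul,
      dotProduct_smul]
    simp [smul_eq_mul, hu]
  rw [htarget]
  have hkey : μe * re ^ 2 / wbar ^ 2 * w ^ 2 ≤ μe * (e ⬝ᵥ X *ᵥ e) := by
    have h1 : μe * re ^ 2 / wbar ^ 2 * w ^ 2 ≤ μe * re ^ 2 / wbar ^ 2 * wbar ^ 2 := by
      apply mul_le_mul_of_nonneg_left hw
      positivity
    have h2 : μe * re ^ 2 / wbar ^ 2 * wbar ^ 2 = μe * re ^ 2 := by
      field_simp
    have h3 : μe * re ^ 2 ≤ μe * (e ⬝ᵥ X *ᵥ e) :=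
      mul_le_mul_of_nonneg_left hE hμe
    linarith
  nlinarith [hz, hkey]
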